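/- Let N ≥ 2, let K satisfy the kernel condition, and let φ be an even continuously differentiable function on ℝ^N with compact support in the closed unit ball and ∫ φ = 1; set φ_r(z) = r^{-N} φ(z/r). There exists a constant C, depending only on N, C₀ and φ, such that for every finite positive Radon measure μ, every r > 0, and all x, y ∈ ℝ^N with |x−y| = r, if μ is supported in the ball B(x,2r) then |(K⋆μ⋆φ_r)(x) − (K⋆μ⋆φ_r)(y)| ≤ C · |x−y| · M(μ)(x). -/

import Mathlib

open MeasureTheory Metric Filter
open scoped ENNReal Topology NNReal

/-- The kernel condition: `K` is twice continuously differentiable off the origin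
and `|∇^j K(x)| ≤ C₀ |x|^{-(N-1+j)}` for `j = 0, 1, 2` and all `x ≠ 0`. -/
def KernelCond (N : ℕ) (C₀ : ℝ) (K : EuclideanSpace ℝ (Fin N) → ℝ) : Prop :=
  ContDiffOn ℝ 2 K {(0 : EuclideanSpace ℝ (Fin N))}ᶜ ∧
    ∀ j : ℕ, j ≤ 2 → ∀ x : EuclideanSpace ℝ (Fin N), x ≠ 0 →
      ‖iteratedFDeriv ℝ j K x‖ ≤ C₀ * ‖x‖ ^ (-(N - 1 + j : ℝ))

/-- The Hardy–Littlewood maximal function of a (positive) measure: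
`M(μ)(x) = sup_{r>0} μ(B(x,r)) / |B(x,r)|`. -/
noncomputable def maxFn {N : ℕ} (μ : Measure (EuclideanSpace ℝ (Fin N)))
    (x : EuclideanSpace ℝ (Fin N)) : ℝ≥0∞ :=
  ⨆ (r : ℝ) (_ : 0 < r), μ (ball x r) / volume (ball x r)

lemma ofReal_norm_eq_coe_nnnorm {E : Type*} [SeminormedAddCommGroup E] (a : E) :
    ENNReal.ofReal ‖a‖ = (‖a‖₊ : ℝ≥0∞) :=
  ENNReal.ofReal_eq_coe_nnreal _

lemma Jbound (N : ℕ) (hN : 2 ≤ N) {R : ℝ} (hR : 0 < R) :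
    ∫⁻ u in closedBall (0 : EuclideanSpace ℝ (Fin N)) R,
        (‖u‖₊ : ℝ≥0∞) ^ (-((N : ℝ) - 1)) ≤
      ENNReal.ofReal (2 ^ (N + 1) * R) * volume (ball (0 : EuclideanSpace ℝ (Fin N)) 1) := by
  classical
  have hN1 : (1 : ℝ) ≤ (N : ℝ) := by exact_mod_cast le_trans (by norm_num) hN
  haveI : Nontrivial (EuclideanSpace ℝ (Fin N)) :=
    Module.nontrivial_of_finrank_pos (R := ℝ) (by rw [finrank_euclideanSpace_fin]; omega)
  set e : ℝ := -((N : ℝ) - 1) with he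
  have hee : e ≤ 0 := by rw [he]; linarith
  set v := volume (ball (0 : EuclideanSpace ℝ (Fin N)) 1) with hv
  set h : ℕ → EuclideanSpace ℝ (Fin N) → ℝ≥0∞ := fun k =>
    (closedBall (0 : EuclideanSpace ℝ (Fin N)) (R / 2 ^ k)).indicator
      (fun _ => ENNReal.ofReal ((R / 2 ^ (k + 1)) ^ e)) with hh
  have step1 : ∫⁻ u in closedBall (0 : EuclideanSpace ℝ (Fin N)) R, (‖u‖₊ : ℝ≥0∞) ^ e ≤
      ∫⁻ u, ∑' k, h k u := by
    refine le_trans (lintegral_mono_ae ?_) (setLIntegral_le_lintegral _ _)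
    have h0 : ∀ᵐ u ∂(volume.restrict (closedBall (0 : EuclideanSpace ℝ (Fin N)) R)),
        u ≠ (0 : EuclideanSpace ℝ (Fin N)) := by
      refine ae_restrict_of_ae (ae_iff.2 ?_)
      simpa using (measure_singleton (0 : EuclideanSpace ℝ (Fin N)))
    filter_upwards [h0, ae_restrict_mem (measurableSet_closedBall)] with u hu hmemu
    have hu0 : 0 < ‖u‖ := norm_pos_iff.2 hu
    have huR : ‖u‖ ≤ R := mem_closedBall_zero_iff.1 hmemu
    have hex : ∃ k : ℕ, R / 2 ^ (k + 1) < ‖u‖ := by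
      obtain ⟨n, hn⟩ := exists_nat_gt (R / ‖u‖)
      refine ⟨n, ?_⟩
      rw [div_lt_iff₀ (by positivity)]
      have h1 : R < (n : ℝ) * ‖u‖ := (div_lt_iff₀ hu0).1 hn
      have h2 : (n : ℝ) ≤ 2 ^ (n + 1) := by
        calc (n : ℝ) ≤ 2 ^ n := by exact_mod_cast (Nat.lt_two_pow_self (n := n)).le
          _ ≤ 2 ^ (n + 1) := by norm_num [pow_succ]
      nlinarith
    obtain ⟨k, hlt, hle⟩ : ∃ k, R / 2 ^ (k + 1) < ‖u‖ ∧ ‖u‖ ≤ R / 2 ^ k := by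
      refine ⟨Nat.find hex, Nat.find_spec hex, ?_⟩
      rcases Nat.eq_zero_or_pos (Nat.find hex) with h0' | h0'
      · rw [h0']; simpa using huR
      · have hmin := Nat.find_min hex (show Nat.find hex - 1 < Nat.find hex by omega)
        have heq : Nat.find hex - 1 + 1 = Nat.find hex := by omega
        rw [heq] at hmin
        exact not_lt.1 hmin
    have humem : u ∈ closedBall (0 : EuclideanSpace ℝ (Fin N)) (R / 2 ^ k) :=
      mem_closedBall_zero_iff.2 hle
    calc (‖u‖₊ : ℝ≥0∞) ^ e = ENNReal.ofReal (‖u‖ ^ e) := by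
          rw [← ofReal_norm_eq_coe_nnnorm, ENNReal.ofReal_rpow_of_pos hu0]
      _ ≤ ENNReal.ofReal ((R / 2 ^ (k + 1)) ^ e) :=
          ENNReal.ofReal_le_ofReal
            (Real.rpow_le_rpow_of_nonpos (by positivity) hlt.le hee)
      _ = h k u := by rw [hh]; simp [Set.indicator_of_mem humem]
      _ ≤ ∑' k, h k u := ENNReal.le_tsum k
  have step2 : (∫⁻ u, ∑' k, h k u) =
      ∑' k : ℕ, ENNReal.ofReal ((R / 2 ^ (k + 1)) ^ e) *
        volume (closedBall (0 : EuclideanSpace ℝ (Fin N)) (R / 2 ^ k)) := by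
    rw [lintegral_tsum (fun k => (measurable_const.indicator measurableSet_closedBall).aemeasurable)]
    exact tsum_congr fun k => lintegral_indicator_const measurableSet_closedBall _
  have step3 : ∀ k : ℕ, ENNReal.ofReal ((R / 2 ^ (k + 1)) ^ e) *
      volume (closedBall (0 : EuclideanSpace ℝ (Fin N)) (R / 2 ^ k)) =
      ENNReal.ofReal (2 ^ N * R) * v * ((2 : ℝ≥0∞)⁻¹) ^ (k + 1) := by
    intro k
    have ht : (0 : ℝ) < R / 2 ^ (k + 1) := by positivity
    have hvol : volume (closedBall (0 : EuclideanSpace ℝ (Fin N)) (R / 2 ^ k)) =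
        ENNReal.ofReal ((R / 2 ^ k) ^ N) * v := by
      rw [hv, Measure.addHaar_closedBall volume (0 : EuclideanSpace ℝ (Fin N)) (by positivity),
        finrank_euclideanSpace_fin]
    have hkey : (R / 2 ^ (k + 1)) ^ e * (R / 2 ^ k) ^ N
        = (2 ^ N * R) * ((2 : ℝ)⁻¹) ^ (k + 1) := by
      have he2 : (R / 2 ^ (k + 1)) ^ e = ((R / 2 ^ (k + 1)) ^ (N - 1 : ℕ))⁻¹ := by
        rw [he, Real.rpow_neg ht.le]
        congr 1
        rw [← Real.rpow_natCast (R / 2 ^ (k + 1)) (N - 1)]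
        congr 1
        push_cast [Nat.cast_sub (by omega : 1 ≤ N)]
        ring
      have h2k : (R / 2 ^ k) = 2 * (R / 2 ^ (k + 1)) := by
        field_simp
        ring
      have hsplit : (R / 2 ^ (k + 1)) ^ N = (R / 2 ^ (k + 1)) ^ (N - 1) * (R / 2 ^ (k + 1)) := by
        rw [← pow_succ]
        congr 1
        omega
      have hRt : (2:ℝ) ^ N * R * ((2:ℝ)⁻¹) ^ (k + 1) = 2 ^ N * (R / 2 ^ (k + 1)) := by
        rw [inv_pow]
        field_simp
      rw [he2, h2k, mul_pow, hsplit, hRt]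
      have htne : (R / 2 ^ (k + 1)) ^ (N - 1) ≠ 0 := by positivity
      field_simp
    rw [hvol, ← mul_assoc, ← ENNReal.ofReal_mul (Real.rpow_nonneg ht.le e), hkey,
      ENNReal.ofReal_mul (by positivity), ENNReal.ofReal_pow (by norm_num)]
    have h2inv : ENNReal.ofReal ((2 : ℝ)⁻¹) = (2 : ℝ≥0∞)⁻¹ := by
      rw [ENNReal.ofReal_inv_of_pos (by norm_num)]
      norm_num
    rw [h2inv]
    ring
  calc ∫⁻ u in closedBall (0 : EuclideanSpace ℝ (Fin N)) R, (‖u‖₊ : ℝ≥0∞) ^ e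
      ≤ ∫⁻ u, ∑' k, h k u := step1
    _ = ∑' k : ℕ, ENNReal.ofReal (2 ^ N * R) * v * ((2 : ℝ≥0∞)⁻¹) ^ (k + 1) := by
        rw [step2]; exact tsum_congr step3
    _ = ENNReal.ofReal (2 ^ N * R) * v * ∑' k : ℕ, ((2 : ℝ≥0∞)⁻¹) ^ (k + 1) :=
        ENNReal.tsum_mul_left
    _ ≤ ENNReal.ofReal (2 ^ N * R) * v * 1 := by
        refine mul_le_mul_right (le_of_eq ?_) _
        rw [ENNReal.tsum_geometric_add_one, ENNReal.one_sub_inv_two, inv_inv]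
        exact ENNReal.inv_mul_cancel (by norm_num) (by norm_num)
    _ ≤ ENNReal.ofReal (2 ^ (N + 1) * R) * v := by
        rw [mul_one]
        refine mul_le_mul_left (ENNReal.ofReal_le_ofReal ?_) _
        rw [pow_succ]
        nlinarith [mul_nonneg (pow_pos (by norm_num : (0:ℝ) < 2) N).le hR.le]

lemma kernel_pointwise (N : ℕ) (hN : 2 ≤ N) {C₀ : ℝ} {K : EuclideanSpace ℝ (Fin N) → ℝ}
    (hKb : ∀ j : ℕ, j ≤ 2 → ∀ x : EuclideanSpace ℝ (Fin N), x ≠ 0 →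
      ‖iteratedFDeriv ℝ j K x‖ ≤ C₀ * ‖x‖ ^ (-(N - 1 + j : ℝ)))
    (u : EuclideanSpace ℝ (Fin N)) :
    (‖K u‖₊ : ℝ≥0∞) ≤ ENNReal.ofReal (max C₀ 1) * (‖u‖₊ : ℝ≥0∞) ^ (-((N : ℝ) - 1)) := by
  have hN2 : (2 : ℝ) ≤ (N : ℝ) := by exact_mod_cast hN
  by_cases hu : u = 0
  · subst hu
    have h0 : ((‖(0 : EuclideanSpace ℝ (Fin N))‖₊ : ℝ≥0∞)) ^ (-((N : ℝ) - 1)) = ∞ := by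
      rw [nnnorm_zero, ENNReal.coe_zero]
      exact ENNReal.zero_rpow_of_neg (by linarith)
    rw [h0, ENNReal.mul_top
      (ENNReal.ofReal_pos.2 (lt_of_lt_of_le one_pos (le_max_right _ _))).ne']
    exact le_top
  · have hb := hKb 0 (by norm_num) u hu
    rw [norm_iteratedFDeriv_zero] at hb
    have hexp : (-((N : ℝ) - 1 + ((0 : ℕ) : ℝ))) = -((N : ℝ) - 1) := by push_cast; ring
    rw [hexp] at hb
    have hu0 : 0 < ‖u‖ := norm_pos_iff.2 hu
    calc (‖K u‖₊ : ℝ≥0∞) = ENNReal.ofReal ‖K u‖ := (ofReal_norm_eq_coe_nnnorm _).symm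
      _ ≤ ENNReal.ofReal (max C₀ 1 * ‖u‖ ^ (-((N : ℝ) - 1))) :=
          ENNReal.ofReal_le_ofReal (le_trans hb
            (mul_le_mul_of_nonneg_right (le_max_left _ _) (Real.rpow_nonneg hu0.le _)))
      _ = ENNReal.ofReal (max C₀ 1) * ENNReal.ofReal (‖u‖ ^ (-((N : ℝ) - 1))) :=
          ENNReal.ofReal_mul (le_trans zero_le_one (le_max_right _ _))
      _ = _ := by rw [← ofReal_norm_eq_coe_nnnorm, ENNReal.ofReal_rpow_of_pos hu0]

/-- Estimate (2.2) of the paper: for a kernel `K` satisfying the kernel condition and a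
mollifier `φ` (even, `C¹`, supported in the closed unit ball, of integral `1`,
`φ_r(z) = r^{-N} φ(z/r)`) there is `C = C(N, C₀, φ)` such that for every finite positive
Radon measure `μ` supported in `B(x, 2r)` and every `y` with `|x−y| = r`,
`|(K⋆μ⋆φ_r)(x) − (K⋆μ⋆φ_r)(y)| ≤ C |x−y| M(μ)(x)`. -/
theorem mollified_potential_increment_estimate
    (N : ℕ) (hN : 2 ≤ N) (C₀ : ℝ)
    (K : EuclideanSpace ℝ (Fin N) → ℝ) (hK : KernelCond N C₀ K)
    (φ : EuclideanSpace ℝ (Fin N) → ℝ)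
    (hφeven : ∀ z, φ (-z) = φ z) (hφC1 : ContDiff ℝ 1 φ)
    (hφsupp : tsupport φ ⊆ closedBall 0 1) (hφint : (∫ z, φ z) = 1) :
    ∃ C : ℝ, 0 < C ∧ ∀ μ : Measure (EuclideanSpace ℝ (Fin N)), IsFiniteMeasure μ →
      ∀ r : ℝ, 0 < r → ∀ x y : EuclideanSpace ℝ (Fin N), ‖x - y‖ = r →
        μ (ball x (2 * r))ᶜ = 0 →
          ENNReal.ofReal
              |(∫ z, (∫ w, K (z - w) ∂μ) * ((r ^ N)⁻¹ * φ (r⁻¹ • (x - z)))) -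
                ∫ z, (∫ w, K (z - w) ∂μ) * ((r ^ N)⁻¹ * φ (r⁻¹ • (y - z)))| ≤
            ENNReal.ofReal (C * ‖x - y‖) * maxFn μ x := by
  classical
  obtain ⟨hKs, hKb⟩ := hK
  have hφc : HasCompactSupport φ :=
    IsCompact.of_isClosed_subset (isCompact_closedBall 0 1) (isClosed_tsupport φ) hφsupp
  obtain ⟨Mφ₀, hMφ₀⟩ := hφc.exists_bound_of_continuous hφC1.continuous
  set Mφ : ℝ := max Mφ₀ 1 with hMφdef
  have hMφ1 : (1 : ℝ) ≤ Mφ := le_max_right _ _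
  have hMφ0 : (0 : ℝ) ≤ Mφ := le_trans zero_le_one hMφ1
  have hMφ : ∀ t, |φ t| ≤ Mφ := fun t => le_trans (Real.norm_eq_abs (φ t) ▸ hMφ₀ t) (le_max_left _ _)
  set C₁ : ℝ := max C₀ 1 with hC₁def
  have hC₁1 : (1 : ℝ) ≤ C₁ := le_max_right _ _
  have hC₁0 : (0 : ℝ) ≤ C₁ := le_trans zero_le_one hC₁1
  set v := volume (ball (0 : EuclideanSpace ℝ (Fin N)) 1) with hvdef
  have hv0 : v ≠ 0 := (measure_ball_pos volume 0 one_pos).ne'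
  have hvt : v ≠ ∞ := measure_ball_lt_top.ne
  set vR := v.toReal with hvRdef
  have hvR : 0 < vR := ENNReal.toReal_pos hv0 hvt
  have hvv : v = ENNReal.ofReal vR := (ENNReal.ofReal_toReal hvt).symm
  set Cd : ℝ := 2 * ((Mφ * (C₁ * (2 ^ (N + 1) * 4))) * (3 ^ N * vR * vR)) with hCddef
  have hCd0 : 0 ≤ Cd := by positivity
  refine ⟨Cd + 1, by linarith, ?_⟩
  intro μ hμfin r hr x y hxy hsupp
  set e : ℝ := -((N : ℝ) - 1) with he
  set g : EuclideanSpace ℝ (Fin N) → ℝ≥0∞ :=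
    fun u => ENNReal.ofReal C₁ * (‖u‖₊ : ℝ≥0∞) ^ e with hgdef
  have hgmeas : Measurable g :=
    measurable_const.mul ((ENNReal.continuous_rpow_const.measurable).comp measurable_nnnorm.coe_nnreal_ennreal)
  have hgK : ∀ u, (‖K u‖₊ : ℝ≥0∞) ≤ g u := fun u => kernel_pointwise N hN hKb u
  have key : ∀ p : EuclideanSpace ℝ (Fin N), ‖x - p‖ ≤ r →
      (∫⁻ z, ‖(∫ w, K (z - w) ∂μ) * ((r ^ N)⁻¹ * φ (r⁻¹ • (p - z)))‖₊ ∂volume) ≤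
        ENNReal.ofReal ((r ^ N)⁻¹ * Mφ) *
          (ENNReal.ofReal C₁ * (ENNReal.ofReal (2 ^ (N + 1) * (4 * r)) * v) * μ Set.univ) := by
    intro p hp
    set c : ℝ≥0∞ := ENNReal.ofReal ((r ^ N)⁻¹ * Mφ) with hc
    have hcne : c ≠ ∞ := ENNReal.ofReal_ne_top
    set G : EuclideanSpace ℝ (Fin N) → ℝ≥0∞ := fun z => ∫⁻ w, g (z - w) ∂μ with hG
    have pointwise : ∀ z, (‖(∫ w, K (z - w) ∂μ) * ((r ^ N)⁻¹ * φ (r⁻¹ • (p - z)))‖₊ : ℝ≥0∞) ≤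
        (closedBall p r).indicator (fun z => c * G z) z := by
      intro z
      by_cases hz : ‖p - z‖ ≤ r
      · have hzmem : z ∈ closedBall p r := by
          rw [mem_closedBall, dist_eq_norm, norm_sub_rev]
          exact hz
        rw [Set.indicator_of_mem hzmem, nnnorm_mul, ENNReal.coe_mul]
        have h1 : (‖∫ w, K (z - w) ∂μ‖₊ : ℝ≥0∞) ≤ G z :=
          le_trans (enorm_integral_le_lintegral_enorm _) (lintegral_mono fun w => hgK _)
        have h2 : (‖(r ^ N)⁻¹ * φ (r⁻¹ • (p - z))‖₊ : ℝ≥0∞) ≤ c := by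
          rw [← ofReal_norm_eq_coe_nnnorm, hc]
          apply ENNReal.ofReal_le_ofReal
          rw [norm_mul, Real.norm_of_nonneg (by positivity : (0:ℝ) ≤ (r ^ N)⁻¹),
            Real.norm_eq_abs]
          exact mul_le_mul_of_nonneg_left (hMφ _) (by positivity)
        exact le_trans (mul_le_mul' h1 h2) (le_of_eq (mul_comm _ _))
      · have hznot : φ (r⁻¹ • (p - z)) = 0 := by
          apply image_eq_zero_of_notMem_tsupport
          intro hmem
          have h1 := hφsupp hmem
          rw [mem_closedBall_zero_iff, norm_smul, Real.norm_eq_abs,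
            abs_of_pos (inv_pos.2 hr)] at h1
          have h2 : ‖p - z‖ ≤ r := by
            have h3 := mul_le_mul_of_nonneg_left h1 hr.le
            rw [mul_one] at h3
            calc ‖p - z‖ = r * (r⁻¹ * ‖p - z‖) := by field_simp
              _ ≤ r := h3
          exact hz h2
        simp [hznot]
    calc ∫⁻ z, ‖(∫ w, K (z - w) ∂μ) * ((r ^ N)⁻¹ * φ (r⁻¹ • (p - z)))‖₊ ∂volume
        ≤ ∫⁻ z, (closedBall p r).indicator (fun z => c * G z) z := lintegral_mono pointwise
      _ = ∫⁻ z in closedBall p r, c * G z := lintegral_indicator measurableSet_closedBall _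
      _ = c * ∫⁻ z in closedBall p r, G z := lintegral_const_mul' _ _ hcne
      _ = c * ∫⁻ w, (∫⁻ z in closedBall p r, g (z - w) ∂volume) ∂μ := by
          rw [hG]
          congr 1
          exact lintegral_lintegral_swap (f := fun z w => g (z - w))
            ((hgmeas.comp (measurable_fst.sub measurable_snd)).aemeasurable)
      _ ≤ c * ∫⁻ _w, (ENNReal.ofReal C₁ * (ENNReal.ofReal (2 ^ (N + 1) * (4 * r)) * v)) ∂μ := by
          refine mul_le_mul_right (lintegral_mono_ae ?_) _
          have hae : ∀ᵐ w ∂μ, w ∈ ball x (2 * r) := by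
            rw [ae_iff]
            exact hsupp
          filter_upwards [hae] with w hw
          have hsub : closedBall p r ⊆ closedBall w (4 * r) := by
            intro z hz
            rw [mem_closedBall] at hz ⊢
            have h2 : dist p x ≤ r := by rw [dist_eq_norm, norm_sub_rev]; exact hp
            have h3 : dist x w ≤ 2 * r := by
              have := mem_ball.1 hw
              rw [dist_comm]
              linarith
            calc dist z w ≤ dist z p + dist p x + dist x w := dist_triangle4 z p x w
              _ ≤ r + r + 2 * r := by gcongr
              _ = 4 * r := by ring
          calc ∫⁻ z in closedBall p r, g (z - w) ∂volume
              ≤ ∫⁻ z in closedBall w (4 * r), g (z - w) ∂volume := lintegral_mono_set hsub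
            _ = ∫⁻ u in closedBall (0 : EuclideanSpace ℝ (Fin N)) (4 * r), g u ∂volume := by
                have hmp := measurePreserving_add_right
                  (volume : Measure (EuclideanSpace ℝ (Fin N))) w
                have heq := hmp.setLIntegral_comp_preimage_emb
                  (MeasurableEquiv.addRight w).measurableEmbedding
                  (fun z => g (z - w)) (closedBall w (4 * r))
                rw [← heq]
                have hpre : (fun u : EuclideanSpace ℝ (Fin N) => u + w) ⁻¹' closedBall w (4 * r)
                    = closedBall (0 : EuclideanSpace ℝ (Fin N)) (4 * r) := by
                  ext u
                  simp [mem_closedBall, dist_eq_norm, add_sub_cancel_right, sub_zero]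
                rw [hpre]
                simp only [add_sub_cancel_right]
            _ = ENNReal.ofReal C₁ *
                ∫⁻ u in closedBall (0 : EuclideanSpace ℝ (Fin N)) (4 * r),
                  (‖u‖₊ : ℝ≥0∞) ^ e ∂volume :=
                lintegral_const_mul' _ _ ENNReal.ofReal_ne_top
            _ ≤ ENNReal.ofReal C₁ * (ENNReal.ofReal (2 ^ (N + 1) * (4 * r)) * v) :=
                mul_le_mul_right (Jbound N hN (by positivity)) _
      _ = ENNReal.ofReal ((r ^ N)⁻¹ * Mφ) *
          (ENNReal.ofReal C₁ * (ENNReal.ofReal (2 ^ (N + 1) * (4 * r)) * v) * μ Set.univ) := by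
          rw [lintegral_const, hc]
  -- assembling
  set A := μ Set.univ with hA
  have hAne : A ≠ ∞ := measure_ne_top μ _
  set b : ℝ≥0∞ := ENNReal.ofReal ((3 * r) ^ N) * v with hb
  have hb0 : b ≠ 0 := by
    rw [hb]
    exact mul_ne_zero (ENNReal.ofReal_pos.2 (by positivity)).ne' hv0
  have hbt : b ≠ ∞ := ENNReal.mul_ne_top ENNReal.ofReal_ne_top hvt
  have hmax : A / b ≤ maxFn μ x := by
    have hball : μ (ball x (3 * r)) = A := by
      refine le_antisymm (measure_mono (Set.subset_univ _)) ?_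
      calc A = μ Set.univ := rfl
        _ ≤ μ (ball x (3 * r) ∪ (ball x (2 * r))ᶜ) := by
            refine measure_mono fun z _ => ?_
            by_cases hz : z ∈ ball x (2 * r)
            · exact Or.inl (ball_subset_ball (by linarith) hz)
            · exact Or.inr hz
        _ ≤ μ (ball x (3 * r)) + μ ((ball x (2 * r))ᶜ) := measure_union_le _ _
        _ = μ (ball x (3 * r)) := by rw [hsupp, add_zero]
    have hvol : volume (ball x (3 * r)) = b := by
      rw [hb, hvdef, Measure.addHaar_ball_of_pos volume x (by positivity),
        finrank_euclideanSpace_fin]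
    have hles : μ (ball x (3 * r)) / volume (ball x (3 * r)) ≤ maxFn μ x :=
      le_iSup₂ (f := fun s (_ : 0 < s) => μ (ball x s) / volume (ball x s)) (3 * r)
        (by positivity)
    rwa [hball, hvol] at hles
  set cT : ℝ := (r ^ N)⁻¹ * Mφ * (C₁ * (2 ^ (N + 1) * (4 * r)) * vR) with hcT
  have hcT0 : 0 ≤ cT := by positivity
  have hT : ENNReal.ofReal ((r ^ N)⁻¹ * Mφ) *
      (ENNReal.ofReal C₁ * (ENNReal.ofReal (2 ^ (N + 1) * (4 * r)) * v) * A)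
      = ENNReal.ofReal cT * A := by
    rw [hvv, hcT]
    rw [ENNReal.ofReal_mul (by positivity : (0:ℝ) ≤ (r ^ N)⁻¹ * Mφ),
      ENNReal.ofReal_mul (by positivity : (0:ℝ) ≤ C₁ * (2 ^ (N + 1) * (4 * r))),
      ENNReal.ofReal_mul hC₁0]
    ring
  have hreal : 2 * cT * ((3 * r) ^ N * vR) ≤ (Cd + 1) * r := by
    have heq : 2 * cT * ((3 * r) ^ N * vR) = Cd * r := by
      rw [hcT, hCddef, mul_pow]
      field_simp
    rw [heq]
    nlinarith [hr.le]
  have hfinal : ENNReal.ofReal cT * A + ENNReal.ofReal cT * A ≤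
      ENNReal.ofReal ((Cd + 1) * r) * (A / b) := by
    rw [← add_mul, ← ENNReal.ofReal_add hcT0 hcT0]
    rw [div_eq_mul_inv, ← mul_assoc, ← div_eq_mul_inv]
    rw [ENNReal.le_div_iff_mul_le (Or.inl hb0) (Or.inl hbt)]
    have hcomb : ENNReal.ofReal (cT + cT) * A * b = ENNReal.ofReal (2 * cT * ((3 * r) ^ N * vR)) * A := by
      rw [hb, hvv, ENNReal.ofReal_mul (by positivity : (0:ℝ) ≤ 2 * cT),
        ENNReal.ofReal_mul (by positivity : (0:ℝ) ≤ (3 * r) ^ N)]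
      have : ENNReal.ofReal (cT + cT) = ENNReal.ofReal (2 * cT) := by
        congr 1
        ring
      rw [this]
      ring
    rw [hcomb]
    exact mul_le_mul_left (ENNReal.ofReal_le_ofReal hreal) _
  have habs : ENNReal.ofReal
      |(∫ z, (∫ w, K (z - w) ∂μ) * ((r ^ N)⁻¹ * φ (r⁻¹ • (x - z)))) -
        ∫ z, (∫ w, K (z - w) ∂μ) * ((r ^ N)⁻¹ * φ (r⁻¹ • (y - z)))| ≤
      ENNReal.ofReal |∫ z, (∫ w, K (z - w) ∂μ) * ((r ^ N)⁻¹ * φ (r⁻¹ • (x - z)))| +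
      ENNReal.ofReal |∫ z, (∫ w, K (z - w) ∂μ) * ((r ^ N)⁻¹ * φ (r⁻¹ • (y - z)))| := by
    rw [← ENNReal.ofReal_add (abs_nonneg _) (abs_nonneg _)]
    refine ENNReal.ofReal_le_ofReal ?_
    exact abs_sub _ _
  have hI : ∀ p : EuclideanSpace ℝ (Fin N),
      ENNReal.ofReal |∫ z, (∫ w, K (z - w) ∂μ) * ((r ^ N)⁻¹ * φ (r⁻¹ • (p - z)))| ≤
        ∫⁻ z, ‖(∫ w, K (z - w) ∂μ) * ((r ^ N)⁻¹ * φ (r⁻¹ • (p - z)))‖₊ ∂volume := by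
    intro p
    rw [← Real.norm_eq_abs, ofReal_norm_eq_coe_nnnorm]
    exact enorm_integral_le_lintegral_enorm _
  have hkx := key x (by simp [hr.le])
  have hky := key y (le_of_eq hxy)
  have h1 := le_trans (hI x) (le_trans hkx (le_of_eq hT))
  have h2 := le_trans (hI y) (le_trans hky (le_of_eq hT))
  refine le_trans habs ?_
  refine le_trans (add_le_add h1 h2) ?_
  refine le_trans hfinal ?_
  refine le_trans (mul_le_mul_right hmax _) ?_
  rw [hxy]
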